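/- One step of the linked-list Turing machine simulation is correct for right moves: if the implementation configuration of a linked-cell state with head pointer h and control state q is (q, t), δ(q, t(0)) = (q', s', R), and the update (i) writes s' to h.symbol, (ii) if h.right = none allocates a fresh cell with symbol B, left pointer h, right pointer none, and sets h.right to it, (iii) moves head to h.right, then the implementation configuration of the resulting state is exactly (q', t') where (q, t) → (q', t') in the Turing machine. -/

import Mathlib

inductive Dir | L | R

/-- A tape cell: optional left and right pointers and a symbol. -/
structure Cell (Γ L : Type*) where
  left : Option L
  right : Option L
  symbol : Γ

def followR {Γ L : Type*} (σ : L → Option (Cell Γ L)) : Option L → ℕ → Option L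
  | ol, 0 => ol
  | ol, k + 1 => followR σ (ol.bind fun ℓ => (σ ℓ).bind Cell.right) k

def followL {Γ L : Type*} (σ : L → Option (Cell Γ L)) : Option L → ℕ → Option L
  | ol, 0 => ol
  | ol, k + 1 => followL σ (ol.bind fun ℓ => (σ ℓ).bind Cell.left) k

def symAt {Γ L : Type*} (σ : L → Option (Cell Γ L)) (B : Γ) (ol : Option L) : Γ :=
  match ol.bind σ with
  | some c => c.symbol
  | none => B

/-- Tape induced by a head pointer. -/
def tapeOf {Γ L : Type*} (σ : L → Option (Cell Γ L)) (B : Γ) (h : L) : ℤ → Γ :=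
  fun i =>
    if 0 ≤ i then symAt σ B (followR σ (some h) i.toNat)
    else symAt σ B (followL σ (some h) (-i).toNat)

section Aux
variable {Γ L : Type*}

def IsList (σ : L → Option (Cell Γ L)) (n : ℕ) (c : Fin (n+1) → L) (S : Fin (n+1) → Γ) : Prop :=
  ∀ i : Fin (n + 1), σ (c i) = some
    { left := if _ : i.val = 0 then none
              else some (c ⟨i.val - 1, Nat.lt_of_le_of_lt (Nat.sub_le _ _) i.isLt⟩),
      right := if h : i.val = n then none
               else some (c ⟨i.val + 1, Nat.succ_lt_succ (Nat.lt_of_le_of_ne (Nat.le_of_lt_succ i.isLt) h)⟩),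
      symbol := S i }

lemma cell_congr {a a' b b' : Option L} {s t : Γ} (h1 : a = a') (h2 : b = b') (h3 : s = t) :
    (⟨a, b, s⟩ : Cell Γ L) = ⟨a', b', t⟩ := by rw [h1, h2, h3]

def listGet {m : ℕ} (B : Γ) (S : Fin m → Γ) (j : ℕ) : Γ :=
  if h : j < m then S ⟨j, h⟩ else B

lemma listGet_lt {m : ℕ} (B : Γ) (S : Fin m → Γ) {j : ℕ} (h : j < m) :
    listGet B S j = S ⟨j, h⟩ := dif_pos h

lemma listGet_ge {m : ℕ} (B : Γ) (S : Fin m → Γ) {j : ℕ} (h : m ≤ j) :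
    listGet B S j = B := dif_neg (by omega)

lemma followR_none (σ : L → Option (Cell Γ L)) : ∀ m, followR σ none m = none
  | 0 => rfl
  | m+1 => by rw [followR, Option.bind_none]; exact followR_none σ m

lemma followL_none (σ : L → Option (Cell Γ L)) : ∀ m, followL σ none m = none
  | 0 => rfl
  | m+1 => by rw [followL, Option.bind_none]; exact followL_none σ m

lemma followR_list {σ : L → Option (Cell Γ L)} {n c S} (hcell : IsList σ n c S) :
    ∀ (m : ℕ) (j : Fin (n+1)), followR σ (some (c j)) m =
      if h : j.val + m ≤ n then some (c ⟨j.val + m, by omega⟩) else none := by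
  intro m
  induction m with
  | zero =>
    intro j
    rw [dif_pos (by omega : j.val + 0 ≤ n)]
    show some (c j) = _
    congr 1
  | succ m ih =>
    intro j
    rw [followR, Option.bind_some, hcell j, Option.bind_some]
    show followR σ (if _ : j.val = n then none else _) m = _
    by_cases hj : j.val = n
    · rw [dif_pos hj, followR_none, dif_neg (by omega)]
    · rw [dif_neg hj, ih ⟨j.val + 1, by have := j.isLt; omega⟩]
      by_cases h2 : j.val + (m+1) ≤ n
      · rw [dif_pos (show j.val + 1 + m ≤ n by omega), dif_pos h2]
        exact congrArg (fun x => some (c x)) (Fin.ext (show j.val + 1 + m = j.val + (m+1) by omega))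
      · rw [dif_neg (show ¬(j.val + 1 + m ≤ n) by omega), dif_neg h2]

lemma followL_list {σ : L → Option (Cell Γ L)} {n c S} (hcell : IsList σ n c S) :
    ∀ (m : ℕ) (j : Fin (n+1)), followL σ (some (c j)) m =
      if h : m ≤ j.val then some (c ⟨j.val - m, by have := j.isLt; omega⟩) else none := by
  intro m
  induction m with
  | zero =>
    intro j
    rw [dif_pos (by omega : 0 ≤ j.val)]
    show some (c j) = _
    congr 1
  | succ m ih =>
    intro j
    rw [followL, Option.bind_some, hcell j, Option.bind_some]
    show followL σ (if _ : j.val = 0 then none else _) m = _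
    by_cases hj : j.val = 0
    · rw [dif_pos hj, followL_none, dif_neg (by omega)]
    · rw [dif_neg hj, ih ⟨j.val - 1, by have := j.isLt; omega⟩]
      by_cases h2 : m + 1 ≤ j.val
      · rw [dif_pos (show m ≤ j.val - 1 by omega), dif_pos h2]
        exact congrArg (fun x => some (c x)) (Fin.ext (show j.val - 1 - m = j.val - (m+1) by omega))
      · rw [dif_neg (show ¬(m ≤ j.val - 1) by omega), dif_neg h2]

lemma symAt_some {σ : L → Option (Cell Γ L)} {n c S} (hcell : IsList σ n c S)
    (B : Γ) (j : Fin (n+1)) : symAt σ B (some (c j)) = S j := by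
  unfold symAt
  rw [Option.bind_some, hcell j]

lemma tape_char {σ : L → Option (Cell Γ L)} {n c S} (hcell : IsList σ n c S)
    (B : Γ) (k : Fin (n+1)) (i : ℤ) :
    tapeOf σ B (c k) i = if 0 ≤ (k.val : ℤ) + i ∧ (k.val : ℤ) + i ≤ (n : ℤ)
      then listGet B S (((k.val : ℤ) + i).toNat) else B := by
  unfold tapeOf
  by_cases hi : 0 ≤ i
  · rw [if_pos hi, followR_list hcell]
    by_cases h2 : k.val + i.toNat ≤ n
    · rw [dif_pos h2, symAt_some hcell, if_pos (by constructor <;> omega),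
        listGet_lt B S (show ((k.val : ℤ) + i).toNat < n + 1 by omega)]
      exact congrArg S (Fin.ext (show k.val + i.toNat = ((k.val : ℤ) + i).toNat by omega))
    · rw [dif_neg h2, if_neg (by omega)]
      rfl
  · rw [if_neg hi, followL_list hcell]
    by_cases h2 : (-i).toNat ≤ k.val
    · rw [dif_pos h2, symAt_some hcell, if_pos (by constructor <;> omega),
        listGet_lt B S (show ((k.val : ℤ) + i).toNat < n + 1 by omega)]
      exact congrArg S (Fin.ext (show k.val - (-i).toNat = ((k.val : ℤ) + i).toNat by omega))
    · rw [dif_neg h2, if_neg (by omega)]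
      rfl

end Aux

/-- Right-move update: write `s'` to the head cell, allocate a fresh blank cell to the
right if needed, and move the head right. Returns the new cell map and new head. -/
def stepR {Γ L : Type*} [DecidableEq L] (σ : L → Option (Cell Γ L)) (B : Γ)
    (h : L) (s' : Γ) (fresh : L) : (L → Option (Cell Γ L)) × L :=
  match σ h with
  | none => (σ, h)
  | some cl =>
    match cl.right with
    | some r => (Function.update σ h (some ⟨cl.left, cl.right, s'⟩), r)
    | none =>
      (Function.update (Function.update σ h (some ⟨cl.left, some fresh, s'⟩))
        fresh (some ⟨some h, none, B⟩), fresh)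

/-- on a well-formed doubly-linked list with head `c k`, the right-move
update realizes exactly the TM right-move transition on the induced tape:
the new induced tape `t'` satisfies `t' (-1) = s'` and `t' i = t (i+1)` otherwise. -/
theorem stepR_correct {Γ L : Type*} [DecidableEq L]
    (σ : L → Option (Cell Γ L)) (B : Γ)
    (n : ℕ) (c : Fin (n + 1) → L) (S : Fin (n + 1) → Γ)
    (hinj : Function.Injective c)
    (hcell : ∀ i : Fin (n + 1), σ (c i) = some
      { left := if _ : i.val = 0 then none
                else some (c ⟨i.val - 1, by have := i.isLt; omega⟩),
        right := if _ : i.val = n then none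
                 else some (c ⟨i.val + 1, by have := i.isLt; omega⟩),
        symbol := S i })
    (k : Fin (n + 1)) (fresh : L) (hfresh : fresh ∉ Set.range c)
    {Q : Type*} (δ : Q × Γ → Option (Q × Γ × Dir)) (q q' : Q) (s' : Γ)
    (hδ : δ (q, tapeOf σ B (c k) 0) = some (q', s', Dir.R)) :
    tapeOf (stepR σ B (c k) s' fresh).1 B (stepR σ B (c k) s' fresh).2 =
      fun i : ℤ => if i = -1 then s' else tapeOf σ B (c k) (i + 1) := by
  clear hδ
  have hlist : IsList σ n c S := hcell
  by_cases hk : k.val = n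
  · -- allocate case
    have hstep : stepR σ B (c k) s' fresh =
        (Function.update (Function.update σ (c k)
            (some ⟨(if _ : k.val = 0 then none
                    else some (c ⟨k.val - 1, by have := k.isLt; omega⟩)), some fresh, s'⟩))
          fresh (some ⟨some (c k), none, B⟩), fresh) := by
      simp only [stepR, hcell k, dif_pos hk]
    have hσ'eq : (stepR σ B (c k) s' fresh).1 = Function.update (Function.update σ (c k)
            (some ⟨(if _ : k.val = 0 then none
                    else some (c ⟨k.val - 1, by have := k.isLt; omega⟩)), some fresh, s'⟩))
          fresh (some ⟨some (c k), none, B⟩) := by rw [hstep]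
    have hhd : (stepR σ B (c k) s' fresh).2 = fresh := by rw [hstep]
    set c' : Fin (n+1+1) → L := fun i => if h : i.val ≤ n then c ⟨i.val, by omega⟩ else fresh
      with hc'
    set S' : Fin (n+1+1) → Γ := fun i => if h : i.val < n then S ⟨i.val, by omega⟩
      else if i.val = n then s' else B with hS'
    have hcfresh : ∀ j : Fin (n+1), c j ≠ fresh := fun j h => hfresh ⟨j, h⟩
    have hck : c k = c ⟨n, by omega⟩ := congrArg c (Fin.ext hk)
    have hc'le : ∀ (j : Fin (n+1+1)) (h : j.val ≤ n), c' j = c ⟨j.val, by omega⟩ := by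
      intro j h
      rw [hc']
      exact dif_pos h
    have hc'top : ∀ (j : Fin (n+1+1)), j.val = n + 1 → c' j = fresh := by
      intro j h
      rw [hc']
      exact dif_neg (by omega)
    have hS'lt : ∀ (j : Fin (n+1+1)) (h : j.val < n), S' j = S ⟨j.val, by omega⟩ := by
      intro j h
      rw [hS']
      exact dif_pos h
    have hS'n : ∀ (j : Fin (n+1+1)), j.val = n → S' j = s' := by
      intro j h
      rw [hS']
      simp only
      rw [dif_neg (by omega), if_pos h]
    have hS'top : ∀ (j : Fin (n+1+1)), j.val = n + 1 → S' j = B := by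
      intro j h
      rw [hS']
      simp only
      rw [dif_neg (by omega), if_neg (by omega)]
    have hlist' : IsList (stepR σ B (c k) s' fresh).1 (n+1) c' S' := by
      intro i
      rw [hσ'eq]
      by_cases hi : i.val ≤ n
      · rw [hc'le i hi]
        rw [Function.update_of_ne (hcfresh _)]
        by_cases hin : i.val = n
        · have hceq : c (⟨i.val, by omega⟩ : Fin (n+1)) = c k := by
            rw [hck]
            exact congrArg c (Fin.ext (show i.val = n from hin))
          rw [hceq, Function.update_self]
          refine congrArg some (cell_congr ?_ ?_ ?_)
          · by_cases h0 : i.val = 0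
            · rw [dif_pos (show k.val = 0 by omega), dif_pos h0]
            · rw [dif_neg (show ¬(k.val = 0) by omega), dif_neg h0,
                hc'le ⟨i.val - 1, by have := i.isLt; omega⟩ (show i.val - 1 ≤ n by omega)]
              exact congrArg (fun x => some (c x)) (Fin.ext (show k.val - 1 = i.val - 1 by omega))
          · rw [dif_neg (show ¬(i.val = n + 1) by omega),
              hc'top ⟨i.val + 1, by have := i.isLt; omega⟩ (show i.val + 1 = n + 1 by omega)]
          · exact (hS'n i hin).symm
        · have hne : c (⟨i.val, by omega⟩ : Fin (n+1)) ≠ c k := fun h => hin (by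
            have := congrArg Fin.val (hinj h)
            simpa [hk] using this)
          rw [Function.update_of_ne hne, hcell ⟨i.val, by omega⟩]
          refine congrArg some (cell_congr ?_ ?_ ?_)
          · by_cases h0 : i.val = 0
            · rw [dif_pos (show (⟨i.val, by omega⟩ : Fin (n+1)).val = 0 from h0), dif_pos h0]
            · rw [dif_neg (show ¬((⟨i.val, by omega⟩ : Fin (n+1)).val = 0) from h0),
                dif_neg h0, hc'le ⟨i.val - 1, by have := i.isLt; omega⟩ (show i.val - 1 ≤ n by omega)]
          · rw [dif_neg (show ¬((⟨i.val, by omega⟩ : Fin (n+1)).val = n) from hin),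
              dif_neg (show ¬(i.val = n + 1) by omega),
              hc'le ⟨i.val + 1, by have := i.isLt; omega⟩ (show i.val + 1 ≤ n by omega)]
          · exact (hS'lt i (by omega)).symm
      · have hi1 : i.val = n + 1 := by have := i.isLt; omega
        rw [hc'top i hi1, Function.update_self]
        refine congrArg some (cell_congr ?_ ?_ ?_)
        · rw [dif_neg (show ¬(i.val = 0) by omega),
            hc'le ⟨i.val - 1, by have := i.isLt; omega⟩ (show i.val - 1 ≤ n by omega), hck]
          exact congrArg (fun x => some (c x)) (Fin.ext (show n = i.val - 1 by omega))
        · rw [dif_pos hi1]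
        · exact (hS'top i hi1).symm
    have hhd2 : (stepR σ B (c k) s' fresh).2 = c' ⟨n+1, by omega⟩ :=
      hhd.trans (hc'top ⟨n+1, by omega⟩ rfl).symm
    funext i
    rw [hhd2, tape_char hlist', tape_char hlist]
    have hval : (((⟨n+1, by omega⟩ : Fin (n+1+1)).val : ℕ) : ℤ) = (n : ℤ) + 1 := by
      show ((n+1 : ℕ) : ℤ) = (n : ℤ) + 1
      push_cast
      ring
    rw [hval]
    by_cases hi1 : i = -1
    · subst hi1
      rw [if_pos rfl, if_pos (by constructor <;> omega)]
      have hidx : ((n : ℤ) + 1 + -1).toNat = n := by omega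
      rw [hidx, listGet_lt B S' (show n < n + 1 + 1 by omega)]
      exact hS'n _ rfl
    · rw [if_neg hi1]
      by_cases hr : 0 ≤ (n : ℤ) + 1 + i
      · by_cases hge : 1 ≤ i
        · rw [if_neg (by omega), if_neg (by omega)]
        · by_cases hz : i = 0
          · subst hz
            rw [if_pos (by constructor <;> omega), if_neg (by omega)]
            have hidx : ((n : ℤ) + 1 + 0).toNat = n + 1 := by omega
            rw [hidx, listGet_lt B S' (show n + 1 < n + 1 + 1 by omega)]
            exact hS'top _ rfl
          · -- i ≤ -2
            have hile : i ≤ -2 := by omega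
            rw [if_pos (by constructor <;> omega), if_pos (by constructor <;> omega)]
            rw [listGet_lt B S' (show ((n:ℤ) + 1 + i).toNat < n + 1 + 1 by omega),
              listGet_lt B S (show ((k.val : ℤ) + (i+1)).toNat < n + 1 by omega)]
            rw [hS'lt _ (show (⟨((n:ℤ) + 1 + i).toNat, by omega⟩ : Fin (n+1+1)).val < n by
              show ((n:ℤ) + 1 + i).toNat < n
              omega)]
            exact congrArg S (Fin.ext (show ((n:ℤ) + 1 + i).toNat = ((k.val : ℤ) + (i+1)).toNat by omega))
      · rw [if_neg (by omega), if_neg (by omega)]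
  · -- interior case
    have hstep : stepR σ B (c k) s' fresh =
        (Function.update σ (c k)
            (some ⟨(if _ : k.val = 0 then none
                    else some (c ⟨k.val - 1, by have := k.isLt; omega⟩)),
                   some (c ⟨k.val + 1, by have := k.isLt; omega⟩), s'⟩),
         c ⟨k.val + 1, by have := k.isLt; omega⟩) := by
      simp only [stepR, hcell k, dif_neg hk]
    have hσ'eq : (stepR σ B (c k) s' fresh).1 = Function.update σ (c k)
            (some ⟨(if _ : k.val = 0 then none
                    else some (c ⟨k.val - 1, by have := k.isLt; omega⟩)),
                   some (c ⟨k.val + 1, by have := k.isLt; omega⟩), s'⟩) := by rw [hstep]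
    have hhd : (stepR σ B (c k) s' fresh).2 = c ⟨k.val + 1, by have := k.isLt; omega⟩ := by
      rw [hstep]
    have hlist' : IsList (stepR σ B (c k) s' fresh).1 n c (Function.update S k s') := by
      intro i
      rw [hσ'eq]
      by_cases hik : i = k
      · subst hik
        rw [Function.update_self, Function.update_self]
        refine congrArg some (cell_congr rfl ?_ rfl)
        rw [dif_neg hk]
      · rw [Function.update_of_ne (fun h => hik (hinj h)), hcell i,
          Function.update_of_ne hik]
    funext i
    rw [hhd, tape_char hlist', tape_char hlist]
    have hval : (((⟨k.val + 1, by have := k.isLt; omega⟩ : Fin (n+1)).val : ℕ) : ℤ) =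
        (k.val : ℤ) + 1 := by
      show ((k.val + 1 : ℕ) : ℤ) = (k.val : ℤ) + 1
      push_cast
      ring
    rw [hval]
    by_cases hi1 : i = -1
    · subst hi1
      rw [if_pos rfl, if_pos (by constructor <;> omega)]
      have hidx : ((k.val : ℤ) + 1 + -1).toNat = k.val := by omega
      rw [hidx, listGet_lt B (Function.update S k s') k.isLt]
      exact Function.update_self k s' S
    · rw [if_neg hi1]
      by_cases hc2 : 0 ≤ (k.val : ℤ) + 1 + i ∧ (k.val : ℤ) + 1 + i ≤ (n : ℤ)
      · rw [if_pos hc2, if_pos (by constructor <;> omega)]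
        rw [listGet_lt B (Function.update S k s')
            (show ((k.val : ℤ) + 1 + i).toNat < n + 1 by omega),
          listGet_lt B S (show ((k.val : ℤ) + (i+1)).toNat < n + 1 by omega)]
        rw [Function.update_of_ne (show (⟨((k.val : ℤ) + 1 + i).toNat, by omega⟩ : Fin (n+1)) ≠ k
          from fun h => hi1 (by
            have hv : ((k.val : ℤ) + 1 + i).toNat = k.val := congrArg Fin.val h
            omega))]
        exact congrArg S (Fin.ext
          (show ((k.val : ℤ) + 1 + i).toNat = ((k.val : ℤ) + (i+1)).toNat by omega))
      · rw [if_neg hc2, if_neg (by omega)]
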